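/- arXiv:2006.01579 — 3 statements merged into one kernel-verified Lean document; each statement's English description precedes it below -/
import Mathlib

section
/- Let N ≥ 2 and let c ∈ ℂ be nonzero. With P the permutation operator on ℂ^N ⊗ ℂ^N, Q the orthogonal-type operator Q_{(a,b),(c,d)} = δ_{b,N+1−a} δ_{d,N+1−c}, and κ = N/2 − 1, define R(u,v) = I + c·P/(u−v) − c·Q/(u−v+cκ). Then for all u, v ∈ ℂ with u−v ≠ 0, u−v+cκ ≠ 0 and v−u+cκ ≠ 0, the unitarity condition holds: R(u,v)·R(v,u) = (1 − c²/(u−v)²)·I⊗I. -/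
noncomputable def Pm (N : ℕ) : Matrix (Fin N × Fin N) (Fin N × Fin N) ℂ :=
  Matrix.of fun p q => if p.1 = q.2 ∧ p.2 = q.1 then 1 else 0

noncomputable def Qm (N : ℕ) : Matrix (Fin N × Fin N) (Fin N × Fin N) ℂ :=
  Matrix.of fun p q => if p.2 = p.1.rev ∧ q.2 = q.1.rev then 1 else 0

lemma rev_swap {n : ℕ} (a b : Fin n) : a = b.rev ↔ b = a.rev := by
  rw [← Fin.rev_eq_iff, eq_comm]

lemma Pm_mul_Pm (N : ℕ) : Pm N * Pm N = 1 := by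
  ext p q
  rw [Matrix.mul_apply, Finset.sum_eq_single ((p.2, p.1) : Fin N × Fin N)]
  · simp [Pm, Matrix.one_apply, Prod.ext_iff, and_comm]
  · rintro ⟨a, b⟩ - hab
    simp only [Pm, Matrix.of_apply]
    rw [if_neg]
    · ring
    · rintro ⟨h1, h2⟩; exact hab (by simp [Prod.ext_iff, h1.symm, h2.symm])
  · simp

lemma Pm_mul_Qm (N : ℕ) : Pm N * Qm N = Qm N := by
  ext p q
  rw [Matrix.mul_apply, Finset.sum_eq_single ((p.2, p.1) : Fin N × Fin N)]
  · simp [Pm, Qm, rev_swap p.1 p.2]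
  · rintro ⟨a, b⟩ - hab
    simp only [Pm, Matrix.of_apply]
    rw [if_neg]
    · ring
    · rintro ⟨h1, h2⟩; exact hab (by simp [Prod.ext_iff, h1.symm, h2.symm])
  · simp

lemma Qm_mul_Pm (N : ℕ) : Qm N * Pm N = Qm N := by
  ext p q
  rw [Matrix.mul_apply, Finset.sum_eq_single ((q.2, q.1) : Fin N × Fin N)]
  · simp [Pm, Qm, rev_swap q.1 q.2]
  · rintro ⟨a, b⟩ - hab
    simp only [Pm, Qm, Matrix.of_apply]
    have : (if a = q.2 ∧ b = q.1 then (1:ℂ) else 0) = 0 := by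
      rw [if_neg]; rintro ⟨h1, h2⟩; exact hab (by simp [Prod.ext_iff, h1, h2])
    rw [this, mul_zero]
  · simp

lemma Qm_mul_Qm (N : ℕ) : Qm N * Qm N = (N : ℂ) • Qm N := by
  ext p q
  simp only [Matrix.mul_apply, Qm, Matrix.of_apply, Matrix.smul_apply, smul_eq_mul,
    Fintype.sum_prod_type]
  by_cases hp : p.2 = p.1.rev <;> by_cases hq : q.2 = q.1.rev <;>
    simp [hp, hq, Finset.sum_ite_eq, Finset.sum_ite_eq', mul_comm]

/-- The `o_N`-invariant R-matrix `R(u,v) = I + c·P/(u−v) − c·Q/(u−v+cκ)` with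
`κ = N/2 − 1`, where `P_{(a,b),(c,d)} = δ_{a,d} δ_{b,c}` and
`Q_{(a,b),(c,d)} = δ_{b,N+1−a} δ_{d,N+1−c}` (index involution `i ↦ N+1−i`, i.e.
`Fin.rev` on `Fin N`). -/
noncomputable def RmatOrth (N : ℕ) (c u v : ℂ) :
    Matrix (Fin N × Fin N) (Fin N × Fin N) ℂ :=
  Matrix.of fun p q =>
    (if p = q then 1 else 0)
      + (c / (u - v)) * (if p.1 = q.2 ∧ p.2 = q.1 then 1 else 0)
      - (c / (u - v + c * ((N : ℂ) / 2 - 1))) *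
          (if p.2 = p.1.rev ∧ q.2 = q.1.rev then 1 else 0)

lemma RmatOrth_eq (N : ℕ) (c u v : ℂ) :
    RmatOrth N c u v = 1 + (c / (u - v)) • Pm N
      + (-(c / (u - v + c * ((N : ℂ) / 2 - 1)))) • Qm N := by
  ext p q
  simp [RmatOrth, Pm, Qm, Matrix.one_apply, sub_eq_add_neg]

/-- The `o_N`-invariant R-matrix satisfies the unitarity condition
`R(u,v)·R(v,u) = (1 − c²/(u−v)²)·I⊗I`. -/
theorem RmatOrth_unitarity (N : ℕ) (hN : 2 ≤ N) (c : ℂ) (hc : c ≠ 0)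
    (u v : ℂ) (huv : u - v ≠ 0)
    (huv' : u - v + c * ((N : ℂ) / 2 - 1) ≠ 0)
    (hvu' : v - u + c * ((N : ℂ) / 2 - 1) ≠ 0) :
    RmatOrth N c u v * RmatOrth N c v u =
      (1 - c ^ 2 / (u - v) ^ 2) • (1 : Matrix (Fin N × Fin N) (Fin N × Fin N) ℂ) := by
  have hvu : v - u ≠ 0 := fun h => huv (by linear_combination -h)
  rw [RmatOrth_eq, RmatOrth_eq]
  set k := c * ((N : ℂ) / 2 - 1) with hk
  have hN2 : (N : ℂ) * c = 2 * k + 2 * c := by rw [hk]; ring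
  set a := c / (u - v) with ha
  set a' := c / (v - u) with ha'
  set b := c / (u - v + k) with hb
  set b' := c / (v - u + k) with hb'
  have h1 : a + a' = 0 := by
    rw [ha, ha']; field_simp; ring
  have h2 : -b + -b' + a * -b' + -b * a' + (N : ℂ) * (b * b') = 0 := by
    rw [ha, ha', hb, hb']
    field_simp
    linear_combination (c * (u - v) * (v - u)) * hN2
  have h3 : 1 + a * a' = 1 - c ^ 2 / (u - v) ^ 2 := by
    rw [ha, ha']; field_simp; ring
  simp only [Matrix.add_mul, Matrix.mul_add, Matrix.smul_mul, Matrix.mul_smul, smul_smul,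
    Matrix.one_mul, Matrix.mul_one, Pm_mul_Pm, Pm_mul_Qm, Qm_mul_Pm, Qm_mul_Qm]
  match_scalars
  · linear_combination h3
  · linear_combination h1
  · linear_combination h2
end

section
/- Let N ≥ 2, let c ∈ ℂ be nonzero, let A be a unital associative ℂ-algebra, and fix one of the two data sets: (orthogonal) ε_i = 1, i' = N+1−i, κ = N/2 − 1, or (symplectic) N = 2n, ε_i = 1 for i ≤ n and −1 for i > n, i' = 2n+1−i, κ = n+1. Let R(u,v) = I + c·P/(u−v) − c·Q/(u−v+cκ) be the corresponding R-matrix, with complex entries viewed in A. Let u, v ∈ ℂ with u ≠ v and u−v+cκ ≠ 0, and let T, S be N×N matrices with entries in A. Then the matrix relation R(u,v)·(T⊗I)·(I⊗S) = (I⊗S)·(T⊗I)·R(u,v) in N²×N² matrices over A holds if and only if for all i,j,k,l ∈ {1,…,N}: [T_{i,j}, S_{k,l}] = (c/(u−v))·(S_{k,j}T_{i,l} − T_{k,j}S_{i,l}) + (c/(u−v+cκ))·Σ_{p=1}^{N} ε_p·(δ_{k,i'} ε_i T_{p,j}S_{p',l} − δ_{l,j'} ε_j S_{k,p'}T_{i,p}).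 -/
/-- The R-matrix `R(u,v) = I + c·P/(u−v) − c·Q/(u−v+cκ)` on `ℂ^N ⊗ ℂ^N`, with its
complex entries viewed inside a unital associative `ℂ`-algebra `A`.  Here
`P_{(a,b),(c,d)} = δ_{a,d} δ_{b,c}` and `Q_{(a,b),(c,d)} = ε_a ε_c δ_{b,a'} δ_{d,c'}`,
for a sign function `ε : Fin N → ℤ` and an index involution `pr : Fin N → Fin N`. -/
noncomputable def RmatA (N : ℕ) (A : Type) [Ring A] [Algebra ℂ A]
    (ε : Fin N → ℤ) (pr : Fin N → Fin N) (κ c u v : ℂ) :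
    Matrix (Fin N × Fin N) (Fin N × Fin N) A :=
  Matrix.of fun p q =>
    (if p = q then 1 else 0)
      + algebraMap ℂ A (c / (u - v)) * (if p.1 = q.2 ∧ p.2 = q.1 then 1 else 0)
      - algebraMap ℂ A (c / (u - v + c * κ)) *
          ((ε p.1 : A) * (ε q.1 : A) * (if p.2 = pr p.1 ∧ q.2 = pr q.1 then 1 else 0))

/-- `(T⊗I)_{(a,b),(c,d)} = T_{a,c} δ_{b,d}` for an `N×N` matrix `T` over `A`. -/
def TtensorI {N : ℕ} {A : Type} [Ring A] (T : Matrix (Fin N) (Fin N) A) :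
    Matrix (Fin N × Fin N) (Fin N × Fin N) A :=
  Matrix.of fun p q => T p.1 q.1 * (if p.2 = q.2 then 1 else 0)

/-- `(I⊗S)_{(a,b),(c,d)} = δ_{a,c} S_{b,d}` for an `N×N` matrix `S` over `A`. -/
def ItensorS {N : ℕ} {A : Type} [Ring A] (S : Matrix (Fin N) (Fin N) A) :
    Matrix (Fin N × Fin N) (Fin N × Fin N) A :=
  Matrix.of fun p q => (if p.1 = q.1 then 1 else 0) * S p.2 q.2


private lemma aux_TI_IS {N : ℕ} {A : Type} [Ring A] (T S : Matrix (Fin N) (Fin N) A)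
    (p q : Fin N × Fin N) :
    (TtensorI T * ItensorS S) p q = T p.1 q.1 * S p.2 q.2 := by
  simp [TtensorI, ItensorS, Matrix.mul_apply, Fintype.sum_prod_type, mul_ite, ite_mul]

private lemma aux_IS_TI {N : ℕ} {A : Type} [Ring A] (T S : Matrix (Fin N) (Fin N) A)
    (p q : Fin N × Fin N) :
    (ItensorS S * TtensorI T) p q = S p.2 q.2 * T p.1 q.1 := by
  simp [TtensorI, ItensorS, Matrix.mul_apply, Fintype.sum_prod_type, mul_ite, ite_mul]

private lemma aux_L {N : ℕ} {A : Type} [Ring A] [Algebra ℂ A]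
    (ε : Fin N → ℤ) (pr : Fin N → Fin N) (κ c u v : ℂ)
    (T S : Matrix (Fin N) (Fin N) A) (i j k l : Fin N) :
    (RmatA N A ε pr κ c u v * (TtensorI T * ItensorS S)) (i,k) (j,l) =
      T i j * S k l + algebraMap ℂ A (c/(u-v)) * (T k j * S i l)
      - algebraMap ℂ A (c/(u-v+c*κ)) *
          ∑ x : Fin N, (ε x : A) * ((if k = pr i then (ε i : A) else 0) * (T x j * S (pr x) l)) := by
  rw [Matrix.mul_apply]
  simp only [Fintype.sum_prod_type, RmatA, aux_TI_IS, Matrix.of_apply]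
  simp [add_mul, sub_mul, Finset.sum_sub_distrib, Finset.sum_add_distrib, ite_mul, mul_ite,
    Prod.ext_iff, ite_and, Finset.mul_sum]
  congr 1
  refine Finset.sum_congr rfl fun x _ => ?_
  rw [(Int.cast_commute (ε i) ((ε x : A))).eq]
  simp [mul_assoc]

private lemma aux_R {N : ℕ} {A : Type} [Ring A] [Algebra ℂ A]
    (ε : Fin N → ℤ) (pr : Fin N → Fin N) (κ c u v : ℂ)
    (T S : Matrix (Fin N) (Fin N) A) (i j k l : Fin N) :
    ((ItensorS S * TtensorI T) * RmatA N A ε pr κ c u v) (i,k) (j,l) =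
      S k l * T i j + algebraMap ℂ A (c/(u-v)) * (S k j * T i l)
      - algebraMap ℂ A (c/(u-v+c*κ)) *
          ∑ x : Fin N, (ε x : A) * ((if l = pr j then (ε j : A) else 0) * (S k (pr x) * T i x)) := by
  rw [Matrix.mul_apply]
  simp only [Fintype.sum_prod_type, RmatA, aux_IS_TI, Matrix.of_apply]
  simp [mul_add, mul_sub, Finset.sum_sub_distrib, Finset.sum_add_distrib, ite_mul, mul_ite,
    Prod.ext_iff, ite_and, Finset.mul_sum]
  have scal : ∀ (z : ℂ) (m n : ℤ) (X : A),
      X * (algebraMap ℂ A z * ((m:A)*(n:A))) = algebraMap ℂ A z * ((m:A) * ((n:A) * X)) := by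
    intro z m n X
    have hm : Commute X ((m:A)) := (Int.cast_commute m X).symm
    have hn : Commute X ((n:A)) := (Int.cast_commute n X).symm
    have hg : Commute X (algebraMap ℂ A z) := (Algebra.commutes z X).symm
    rw [(hg.mul_right (hm.mul_right hn)).eq]
    simp [mul_assoc]
  rw [← Algebra.commutes (c/(u-v)) (S k j * T i l)]
  congr 1
  split
  · exact Finset.sum_congr rfl fun x _ => scal _ _ _ _
  · rfl

private lemma aux_rearr {A : Type} [Ring A] (a b p q x y : A) :
    a + p - x = b + q - y ↔ a - b = (q - p) + (x - y) := by
  rw [← sub_eq_zero, show a + p - x - (b + q - y) = a - b - ((q - p) + (x - y)) by abel,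
    sub_eq_zero]
/-- For the orthogonal data set (`ε_i = 1`, `i' = N+1−i` i.e. `Fin.rev`, `κ = N/2 − 1`)
or the symplectic data set (`N = 2n`, `ε_i = ±1`, `i' = 2n+1−i` i.e. `Fin.rev`,
`κ = n+1`), the matrix RTT-relation
`R(u,v)·(T⊗I)·(I⊗S) = (I⊗S)·(T⊗I)·R(u,v)` holds if and only if the componentwise
commutation relations hold: for all `i,j,k,l`,
`[T_{i,j}, S_{k,l}] = (c/(u−v))·(S_{k,j}T_{i,l} − T_{k,j}S_{i,l})
 + (c/(u−v+cκ))·Σ_p ε_p·(δ_{k,i'} ε_i T_{p,j}S_{p',l} − δ_{l,j'} ε_j S_{k,p'}T_{i,p})`. -/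
theorem rtt_iff_componentwise (N : ℕ) (hN : 2 ≤ N) (c : ℂ) (hc : c ≠ 0)
    (A : Type) [Ring A] [Algebra ℂ A]
    (ε : Fin N → ℤ) (pr : Fin N → Fin N) (κ : ℂ)
    (hdata : ((∀ i, ε i = 1) ∧ pr = Fin.rev ∧ κ = (N : ℂ) / 2 - 1) ∨
      (∃ n, N = 2 * n ∧ (∀ i : Fin N, ε i = if (i : ℕ) < n then 1 else -1) ∧
        pr = Fin.rev ∧ κ = (n : ℂ) + 1))
    (u v : ℂ) (huv : u ≠ v) (hκ : u - v + c * κ ≠ 0)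
    (T S : Matrix (Fin N) (Fin N) A) :
    RmatA N A ε pr κ c u v * TtensorI T * ItensorS S =
        ItensorS S * TtensorI T * RmatA N A ε pr κ c u v ↔
      ∀ i j k l : Fin N,
        T i j * S k l - S k l * T i j =
          algebraMap ℂ A (c / (u - v)) * (S k j * T i l - T k j * S i l)
            + algebraMap ℂ A (c / (u - v + c * κ)) *
                ∑ p : Fin N, (ε p : A) *
                  ((if k = pr i then (ε i : A) else 0) * (T p j * S (pr p) l)
                    - (if l = pr j then (ε j : A) else 0) * (S k (pr p) * T i p)) := by
  rw [mul_assoc, ← Matrix.ext_iff]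
  constructor
  · intro h i j k l
    have hh := h (i,k) (j,l)
    rw [aux_L, aux_R, aux_rearr] at hh
    rw [hh]
    simp only [mul_sub, Finset.sum_sub_distrib]
  · rintro h ⟨i,k⟩ ⟨j,l⟩
    rw [aux_L, aux_R, aux_rearr]
    rw [h i j k l]
    simp only [mul_sub, Finset.sum_sub_distrib]
end

section
/- Let N ≥ 2, let c ∈ ℂ be nonzero, let A be a unital associative ℂ-algebra, and fix one of the two data sets: (orthogonal) ε_i = 1, i' = N+1−i, κ = N/2 − 1, or (symplectic) N = 2n, ε_i = 1 for i ≤ n and −1 for i > n, i' = 2n+1−i, κ = n+1, with R(u,v) = I + c·P/(u−v) − c·Q/(u−v+cκ) the corresponding R-matrix. Let u, v ∈ ℂ satisfy u−v ∉ {0, c, −c}, u−v+cκ ≠ 0 and v−u+cκ ≠ 0. Suppose T and S are invertible N×N matrices with entries in A satisfying R(u,v)·(T⊗I)·(I⊗S) = (I⊗S)·(T⊗I)·R(u,v). Then the transpose-inverse matrices T̂ = (T^{−1})^t and Ŝ = (S^{−1})^t satisfy the same relation: R(u,v)·(T̂⊗I)·(I⊗Ŝ) = (I⊗Ŝ)·(T̂⊗I)·R(u,v).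 -/
/-- The twisted transposition `(M^t)_{i,j} = ε_i ε_j M_{j',i'}` of an `N×N` matrix `M`
over `A`. -/
def twtA {N : ℕ} {A : Type} [Ring A] (ε : Fin N → ℤ) (pr : Fin N → Fin N)
    (M : Matrix (Fin N) (Fin N) A) : Matrix (Fin N) (Fin N) A :=
  Matrix.of fun i j => ((ε i : A) * (ε j : A)) * M (pr j) (pr i)

section Aux

variable {N : ℕ} {A : Type} [Ring A] [Algebra ℂ A]

/-- The permutation matrix P. -/
def PmX (N : ℕ) (A : Type) [Ring A] : Matrix (Fin N × Fin N) (Fin N × Fin N) A :=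
  Matrix.of fun p q => if p.1 = q.2 ∧ p.2 = q.1 then 1 else 0

/-- The Q matrix. -/
def QmX (N : ℕ) (A : Type) [Ring A] (ε : Fin N → ℤ) :
    Matrix (Fin N × Fin N) (Fin N × Fin N) A :=
  Matrix.of fun p q => (ε p.1 : A) * (ε q.1 : A) *
    (if p.2 = p.1.rev ∧ q.2 = q.1.rev then 1 else 0)

theorem RmatA_eq (ε : Fin N → ℤ) (κ c u v : ℂ) :
    RmatA N A ε Fin.rev κ c u v =
      1 + (c / (u - v)) • PmX N A - (c / (u - v + c * κ)) • QmX N A ε := by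
  ext p q
  simp only [RmatA, PmX, QmX, Matrix.sub_apply, Matrix.add_apply, Matrix.smul_apply,
    Matrix.one_apply, Matrix.of_apply]
  simp [Algebra.smul_def, mul_assoc]

theorem PmX_mul_PmX : PmX N A * PmX N A = 1 := by
  ext ⟨a, b⟩ ⟨c, d⟩
  simp [PmX, Matrix.mul_apply, Matrix.one_apply, Fintype.sum_prod_type, ite_and,
    Prod.ext_iff, eq_comm]


theorem PmX_mul_QmX (ε : Fin N → ℤ) (θ : ℤ) (hsq : ∀ i, ε i * ε i = 1)
    (hθ : ∀ i, ε i * ε (Fin.rev i) = θ) :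
    PmX N A * QmX N A ε = ((θ : ℤ) : ℂ) • QmX N A ε := by
  have hrevZ : ∀ i : Fin N, ε (Fin.rev i) = θ * ε i := by
    intro i
    have h1 : ε i * (ε i * ε (Fin.rev i)) = ε i * θ := by rw [hθ i]
    rw [← mul_assoc, hsq i, one_mul] at h1
    rw [h1]; ring
  have hrev : ∀ i : Fin N, (ε (Fin.rev i) : A) = ((θ : ℤ) : A) * (ε i : A) := by
    intro i; rw [hrevZ i]; push_cast; ring
  ext ⟨a, b⟩ ⟨c, d⟩
  simp only [PmX, QmX, Matrix.mul_apply, Matrix.of_apply, Fintype.sum_prod_type,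
    Matrix.smul_apply, ite_and, ite_mul, mul_ite, one_mul, zero_mul, mul_zero,
    Finset.sum_ite_eq, Finset.sum_ite_eq', Finset.mem_univ, if_true]
  rw [Finset.sum_eq_single b (fun x _ hx => by simp [Ne.symm hx])
    (fun h => absurd (Finset.mem_univ b) h)]
  by_cases hd : d = c.rev
  · by_cases hb : b = a.rev
    · subst hb
      simp [hd, Fin.rev_rev, hrev, Algebra.smul_def, map_intCast, mul_assoc]
    · simp [hd, hb, show ¬(a = b.rev) from fun h => hb (by rw [h, Fin.rev_rev])]
  · simp [hd]

theorem QmX_mul_PmX (ε : Fin N → ℤ) (θ : ℤ) (hsq : ∀ i, ε i * ε i = 1)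
    (hθ : ∀ i, ε i * ε (Fin.rev i) = θ) :
    QmX N A ε * PmX N A = ((θ : ℤ) : ℂ) • QmX N A ε := by
  have hrevZ : ∀ i : Fin N, ε (Fin.rev i) = θ * ε i := by
    intro i
    have h1 : ε i * (ε i * ε (Fin.rev i)) = ε i * θ := by rw [hθ i]
    rw [← mul_assoc, hsq i, one_mul] at h1
    rw [h1]; ring
  have hrev : ∀ i : Fin N, (ε (Fin.rev i) : A) = ((θ : ℤ) : A) * (ε i : A) := by
    intro i; rw [hrevZ i]; push_cast; ring
  ext ⟨a, b⟩ ⟨c, d⟩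
  simp only [PmX, QmX, Matrix.mul_apply, Matrix.of_apply, Fintype.sum_prod_type,
    Matrix.smul_apply, ite_and, ite_mul, mul_ite, one_mul, zero_mul, mul_zero,
    mul_one, Finset.sum_ite_eq, Finset.sum_ite_eq', Finset.mem_univ, if_true]
  rw [Finset.sum_eq_single d (fun x _ hx => by simp [hx])
    (fun h => absurd (Finset.mem_univ d) h)]
  rw [Finset.sum_eq_single c (fun x _ hx => by simp [hx])
    (fun h => absurd (Finset.mem_univ c) h)]
  simp only [if_pos rfl]
  by_cases hb : b = a.rev
  · by_cases hd : d = c.rev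
    · subst hb; subst hd
      simp only [Fin.rev_rev, eq_self_iff_true, if_true, Algebra.smul_def, map_intCast]
      rw [hrevZ c, ← Int.cast_mul, ← Int.cast_mul, ← Int.cast_mul]
      congr 1; ring
    · have hcd : ¬(c = d.rev) := fun h => hd (by rw [h, Fin.rev_rev])
      simp only [hcd, hd, if_false, smul_ite, smul_zero, ite_self]
  · simp [hb]

theorem QmX_mul_QmX (ε : Fin N → ℤ) (hsq : ∀ i, ε i * ε i = 1) :
    QmX N A ε * QmX N A ε = ((N : ℕ) : ℂ) • QmX N A ε := by
  have hsqA : ∀ i : Fin N, (ε i : A) * (ε i : A) = 1 := by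
    intro i; rw [← Int.cast_mul, hsq i, Int.cast_one]
  ext ⟨a, b⟩ ⟨c, d⟩
  simp only [QmX, Matrix.mul_apply, Matrix.of_apply, Fintype.sum_prod_type,
    Matrix.smul_apply, ite_and, ite_mul, mul_ite, one_mul, zero_mul, mul_zero,
    mul_one, Finset.sum_ite_eq, Finset.sum_ite_eq', Finset.mem_univ, if_true]
  by_cases hb : b = a.rev
  · by_cases hd : d = c.rev
    · simp only [hb, hd, eq_self_iff_true, if_true]
      have : ∀ x : Fin N, (ε a : A) * (ε x : A) * ((ε x : A) * (ε c : A)) =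
          (ε a : A) * (ε c : A) := by
        intro x
        rw [mul_assoc, ← mul_assoc ((ε x : ℤ) : A), hsqA, one_mul]
      rw [Finset.sum_congr rfl (fun x _ => this x), Finset.sum_const, Finset.card_univ,
        Fintype.card_fin]
      simp [Algebra.smul_def, nsmul_eq_mul]
    · simp [hb, hd]
  · simp [hb]

theorem key_mul {M : Type} [Ring M] [Algebra ℂ M] (P Q : M) (tn nn : ℂ)
    (hPP : P * P = 1) (hPQ : P * Q = tn • Q) (hQP : Q * P = tn • Q)
    (hQQ : Q * Q = nn • Q) (a b a' b' f : ℂ)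
    (hf : 1 + a * a' = f) (hP : a + a' = 0)
    (hQ : -b - b' - tn * (a * b') - tn * (a' * b) + nn * (b * b') = 0) :
    (1 + a • P - b • Q) * (1 + a' • P - b' • Q) = f • 1 := by
  have expand : (1 + a • P - b • Q) * (1 + a' • P - b' • Q)
      = (1 + a * a') • 1 + (a + a') • P
        + (-b - b' - tn * (a * b') - tn * (a' * b) + nn * (b * b')) • Q := by
    simp only [mul_add, add_mul, sub_mul, mul_sub, one_mul, mul_one,
      smul_mul_assoc, mul_smul_comm, hPP, hPQ, hQP, hQQ, smul_smul]
    module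
  rw [expand, hP, hQ, hf]
  simp

theorem TtensorI_mul (X Y : Matrix (Fin N) (Fin N) A) :
    TtensorI (X * Y) = TtensorI X * TtensorI Y := by
  ext ⟨a, b⟩ ⟨c, d⟩
  simp [TtensorI, Matrix.mul_apply, Fintype.sum_prod_type, mul_ite, ite_mul,
    mul_zero, zero_mul, mul_one, Finset.sum_ite_eq, Finset.sum_ite_eq',
    Finset.sum_mul, Finset.mul_sum]

theorem TtensorI_one : TtensorI (1 : Matrix (Fin N) (Fin N) A) = 1 := by
  ext ⟨a, b⟩ ⟨c, d⟩
  simp only [TtensorI, Matrix.one_apply, Prod.ext_iff, ite_and, Matrix.of_apply]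
  by_cases h : a = c <;> by_cases h2 : b = d <;> simp [h, h2]

theorem ItensorS_mul (X Y : Matrix (Fin N) (Fin N) A) :
    ItensorS (X * Y) = ItensorS X * ItensorS Y := by
  ext ⟨a, b⟩ ⟨c, d⟩
  simp [ItensorS, Matrix.mul_apply, Fintype.sum_prod_type, mul_ite, ite_mul,
    mul_zero, zero_mul, one_mul, Finset.sum_ite_eq, Finset.sum_ite_eq',
    Finset.sum_mul, Finset.mul_sum]

theorem ItensorS_one : ItensorS (1 : Matrix (Fin N) (Fin N) A) = 1 := by
  ext ⟨a, b⟩ ⟨c, d⟩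
  simp only [ItensorS, Matrix.one_apply, Prod.ext_iff, ite_and, Matrix.of_apply]
  by_cases h : a = c <;> by_cases h2 : b = d <;> simp [h, h2]

theorem mul_TI_IS_apply (R : Matrix (Fin N × Fin N) (Fin N × Fin N) A)
    (X Y : Matrix (Fin N) (Fin N) A) (p q : Fin N × Fin N) :
    (R * TtensorI X * ItensorS Y) p q
      = ∑ r : Fin N × Fin N, R p r * (X r.1 q.1 * Y r.2 q.2) := by
  simp [TtensorI, ItensorS, Matrix.mul_apply, Fintype.sum_prod_type, mul_ite, ite_mul,
    mul_zero, zero_mul, mul_one, one_mul, Finset.sum_ite_eq, Finset.sum_ite_eq',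
    Finset.sum_mul, Finset.mul_sum, mul_assoc]
  rw [Finset.sum_comm]

theorem TI_IS_mul_apply (R : Matrix (Fin N × Fin N) (Fin N × Fin N) A)
    (X Y : Matrix (Fin N) (Fin N) A) (p q : Fin N × Fin N) :
    (TtensorI X * ItensorS Y * R) p q
      = ∑ r : Fin N × Fin N, X p.1 r.1 * (Y p.2 r.2 * R r q) := by
  simp [TtensorI, ItensorS, Matrix.mul_apply, Fintype.sum_prod_type, mul_ite, ite_mul,
    mul_zero, zero_mul, mul_one, one_mul, Finset.sum_ite_eq, Finset.sum_ite_eq',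
    Finset.sum_mul, Finset.mul_sum, mul_assoc]

theorem IS_TI_mul_apply (R : Matrix (Fin N × Fin N) (Fin N × Fin N) A)
    (X Y : Matrix (Fin N) (Fin N) A) (p q : Fin N × Fin N) :
    (ItensorS Y * TtensorI X * R) p q
      = ∑ r : Fin N × Fin N, Y p.2 r.2 * (X p.1 r.1 * R r q) := by
  simp [TtensorI, ItensorS, Matrix.mul_apply, Fintype.sum_prod_type, mul_ite, ite_mul,
    mul_zero, zero_mul, mul_one, one_mul, Finset.sum_ite_eq, Finset.sum_ite_eq',
    Finset.sum_mul, Finset.mul_sum, mul_assoc]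

theorem mul_IS_TI_apply (R : Matrix (Fin N × Fin N) (Fin N × Fin N) A)
    (X Y : Matrix (Fin N) (Fin N) A) (p q : Fin N × Fin N) :
    (R * ItensorS Y * TtensorI X) p q
      = ∑ r : Fin N × Fin N, R p r * (Y r.2 q.2 * X r.1 q.1) := by
  simp [TtensorI, ItensorS, Matrix.mul_apply, Fintype.sum_prod_type, mul_ite, ite_mul,
    mul_zero, zero_mul, mul_one, one_mul, Finset.sum_ite_eq, Finset.sum_ite_eq',
    Finset.sum_mul, Finset.mul_sum, mul_assoc]

/-- Simultaneous twisted transposition in both tensor factors. -/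
def t12m (ε : Fin N → ℤ) (M : Matrix (Fin N × Fin N) (Fin N × Fin N) A) :
    Matrix (Fin N × Fin N) (Fin N × Fin N) A :=
  Matrix.of fun p q => ((ε p.1 * ε p.2 * ε q.1 * ε q.2 : ℤ) : A) *
    M (q.1.rev, q.2.rev) (p.1.rev, p.2.rev)

theorem t12m_add (ε : Fin N → ℤ) (M M' : Matrix (Fin N × Fin N) (Fin N × Fin N) A) :
    t12m ε (M + M') = t12m ε M + t12m ε M' := by
  ext p q; simp [t12m, mul_add]

theorem t12m_sub (ε : Fin N → ℤ) (M M' : Matrix (Fin N × Fin N) (Fin N × Fin N) A) :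
    t12m ε (M - M') = t12m ε M - t12m ε M' := by
  ext p q; simp [t12m, mul_sub]

theorem t12m_smul (ε : Fin N → ℤ) (r : ℂ) (M : Matrix (Fin N × Fin N) (Fin N × Fin N) A) :
    t12m ε (r • M) = r • t12m ε M := by
  ext p q
  simp only [t12m, Matrix.of_apply, Matrix.smul_apply, Algebra.smul_def]
  rw [← mul_assoc, Int.cast_comm, mul_assoc]

theorem t12m_one (ε : Fin N → ℤ) (hsq : ∀ i, ε i * ε i = 1) :
    t12m ε (1 : Matrix (Fin N × Fin N) (Fin N × Fin N) A) = 1 := by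
  ext ⟨a, b⟩ ⟨c, d⟩
  simp only [t12m, Matrix.of_apply, Matrix.one_apply, Prod.ext_iff, Fin.rev_inj]
  by_cases h1 : a = c <;> by_cases h2 : b = d <;> simp [h1, h2, eq_comm]
  subst h1; subst h2
  have hz : ε a * ε b * ε a * ε b = 1 := by linear_combination (ε b * ε b) * hsq a + hsq b
  rw [← Int.cast_mul, ← Int.cast_mul, ← Int.cast_mul, hz, Int.cast_one]

theorem t12m_PmX (ε : Fin N → ℤ) (hsq : ∀ i, ε i * ε i = 1) :
    t12m ε (PmX N A) = PmX N A := by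
  ext ⟨a, b⟩ ⟨c, d⟩
  simp only [t12m, PmX, Matrix.of_apply, Fin.rev_inj]
  by_cases h1 : a = d <;> by_cases h2 : b = c <;>
    simp [h1, h2, eq_comm, and_comm]
  subst h1; subst h2
  have hz : ε a * ε b * ε b * ε a = 1 := by linear_combination (ε a * ε a) * hsq b + hsq a
  rw [← Int.cast_mul, ← Int.cast_mul, ← Int.cast_mul, hz, Int.cast_one]

theorem t12m_QmX (ε : Fin N → ℤ) (hsq : ∀ i, ε i * ε i = 1) :
    t12m ε (QmX N A ε) = QmX N A ε := by
  ext ⟨a, b⟩ ⟨c, d⟩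
  simp only [t12m, QmX, Matrix.of_apply, Fin.rev_rev, Fin.rev_eq_iff]
  by_cases h1 : b = a.rev <;> by_cases h2 : d = c.rev <;>
    simp [h1, h2, eq_comm, Fin.rev_eq_iff, mul_ite, mul_zero, mul_one]
  subst h1; subst h2
  simp only [← Int.cast_mul]
  congr 1
  linear_combination (-(ε a * ε c)) * hsq a.rev +
    (-(ε a * ε c * ε a.rev * ε a.rev)) * hsq c.rev

theorem t12m_RmatA (ε : Fin N → ℤ) (hsq : ∀ i, ε i * ε i = 1) (κ c u v : ℂ) :
    t12m ε (RmatA N A ε Fin.rev κ c u v) = RmatA N A ε Fin.rev κ c u v := by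
  rw [RmatA_eq, t12m_sub, t12m_add, t12m_smul, t12m_smul, t12m_one ε hsq,
    t12m_PmX ε hsq, t12m_QmX ε hsq]

theorem RmatA_commute (ε : Fin N → ℤ) (pr : Fin N → Fin N) (κ c u v : ℂ)
    (p q : Fin N × Fin N) (x : A) :
    Commute (RmatA N A ε pr κ c u v p q) x := by
  have hite : ∀ (P : Prop) (_ : Decidable P), Commute x (if P then (1:A) else 0) := by
    intro P _
    split
    exacts [Commute.one_right x, Commute.zero_right x]
  have halg : ∀ r : ℂ, Commute x (algebraMap ℂ A r) := fun r => (Algebra.commutes r x).symm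
  have hint : ∀ n : ℤ, Commute x ((n : ℤ) : A) := fun n => (Int.cast_comm n x).symm
  show Commute _ x
  simp only [RmatA, Matrix.of_apply]
  exact (((hite _ _).add_right ((halg _).mul_right (hite _ _))).sub_right
    ((halg _).mul_right (((hint _).mul_right (hint _)).mul_right (hite _ _)))).symm

theorem shuffle1 (z x y : A) (hz : ∀ w : A, z * w = w * z) (kk e1 e2 e3 e4 m : ℤ)
    (hm : kk * e1 * e2 * e3 * e4 = m) :
    ((kk : A) * z) * ((((e1 : A) * (e2 : A)) * x) * (((e3 : A) * (e4 : A)) * y))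
      = (m : A) * (x * (y * z)) := by
  subst hm
  have hx : ∀ (n : ℤ) (a b : A), a * ((n : A) * b) = (n : A) * (a * b) := by
    intro n a b; rw [← mul_assoc, ← Int.cast_comm, mul_assoc]
  rw [Int.cast_mul, Int.cast_mul, Int.cast_mul, Int.cast_mul]
  simp only [mul_assoc]
  rw [hz]
  simp only [mul_assoc]
  rw [hx e3 x, hx e4 x]

theorem lemA (ε : Fin N → ℤ) (hsq : ∀ i, ε i * ε i = 1)
    (R : Matrix (Fin N × Fin N) (Fin N × Fin N) A)
    (hR : t12m ε R = R) (hcent : ∀ p q (x : A), Commute (R p q) x)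
    (X Y : Matrix (Fin N) (Fin N) A) :
    R * TtensorI (twtA ε Fin.rev X) * ItensorS (twtA ε Fin.rev Y)
      = t12m ε (TtensorI X * ItensorS Y * R) := by
  ext p q
  rw [mul_TI_IS_apply]
  show _ = ((ε p.1 * ε p.2 * ε q.1 * ε q.2 : ℤ) : A) *
    (TtensorI X * ItensorS Y * R) (q.1.rev, q.2.rev) (p.1.rev, p.2.rev)
  rw [TI_IS_mul_apply, Finset.mul_sum]
  refine Fintype.sum_equiv (Equiv.prodCongr Fin.revPerm Fin.revPerm) _ _ ?_
  rintro ⟨x1, x2⟩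
  simp only [Equiv.prodCongr_apply, Prod.map_apply, Fin.revPerm_apply, twtA, Matrix.of_apply]
  conv_lhs => rw [← hR]
  simp only [t12m, Matrix.of_apply]
  exact shuffle1 _ _ _ (fun w => (hcent _ _ w).eq) _ _ _ _ _ _
    (by linear_combination (ε p.1 * ε p.2 * ε q.1 * ε q.2 * ε x2 * ε x2) * hsq x1
      + (ε p.1 * ε p.2 * ε q.1 * ε q.2) * hsq x2)

theorem shuffle2 (z v w : A) (hz : ∀ w : A, z * w = w * z) (e1 e2 e3 e4 kk m : ℤ)
    (hm : e1 * e2 * e3 * e4 * kk = m) :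
    (((e1 : A) * (e2 : A)) * v) * ((((e3 : A) * (e4 : A)) * w) * ((kk : A) * z))
      = (m : A) * (z * (v * w)) := by
  subst hm
  have hx : ∀ (n : ℤ) (a b : A), a * ((n : A) * b) = (n : A) * (a * b) := by
    intro n a b; rw [← mul_assoc, ← Int.cast_comm, mul_assoc]
  conv_rhs => rw [hz (v * w)]
  simp only [Int.cast_mul, mul_assoc]
  rw [hx e3 v, hx e4 v, hx kk w, hx kk v]

theorem lemB (ε : Fin N → ℤ) (hsq : ∀ i, ε i * ε i = 1)
    (R : Matrix (Fin N × Fin N) (Fin N × Fin N) A)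
    (hR : t12m ε R = R) (hcent : ∀ p q (x : A), Commute (R p q) x)
    (X Y : Matrix (Fin N) (Fin N) A) :
    ItensorS (twtA ε Fin.rev Y) * TtensorI (twtA ε Fin.rev X) * R
      = t12m ε (R * ItensorS Y * TtensorI X) := by
  ext p q
  rw [IS_TI_mul_apply]
  show _ = ((ε p.1 * ε p.2 * ε q.1 * ε q.2 : ℤ) : A) *
    (R * ItensorS Y * TtensorI X) (q.1.rev, q.2.rev) (p.1.rev, p.2.rev)
  rw [mul_IS_TI_apply, Finset.mul_sum]
  refine Fintype.sum_equiv (Equiv.prodCongr Fin.revPerm Fin.revPerm) _ _ ?_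
  rintro ⟨x1, x2⟩
  simp only [Equiv.prodCongr_apply, Prod.map_apply, Fin.revPerm_apply, twtA, Matrix.of_apply]
  conv_lhs => rw [← hR]
  simp only [t12m, Matrix.of_apply]
  exact shuffle2 _ _ _ (fun w => (hcent _ _ w).eq) _ _ _ _ _ _
    (by linear_combination (ε p.1 * ε p.2 * ε q.1 * ε q.2 * ε x1 * ε x1) * hsq x2
      + (ε p.1 * ε p.2 * ε q.1 * ε q.2) * hsq x1)

end Aux

/-- For the orthogonal data set (`ε_i = 1`, `i' = N+1−i` i.e. `Fin.rev`, `κ = N/2 − 1`)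
or the symplectic data set (`N = 2n`, `ε_i = ±1`, `i' = 2n+1−i` i.e. `Fin.rev`,
`κ = n+1`): if invertible matrices `T`, `S` over a unital `ℂ`-algebra `A` satisfy the
RTT-relation `R(u,v)·(T⊗I)·(I⊗S) = (I⊗S)·(T⊗I)·R(u,v)` (with
`u−v ∉ {0, c, −c}`, `u−v+cκ ≠ 0`, `v−u+cκ ≠ 0`), then the transpose-inverse matrices
`T̂ = (T⁻¹)^t` and `Ŝ = (S⁻¹)^t` satisfy the same relation. -/
theorem rtt_transpose_inverse (N : ℕ) (hN : 2 ≤ N) (c : ℂ) (hc : c ≠ 0)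
    (A : Type) [Ring A] [Algebra ℂ A]
    (ε : Fin N → ℤ) (pr : Fin N → Fin N) (κ : ℂ)
    (hdata : ((∀ i, ε i = 1) ∧ pr = Fin.rev ∧ κ = (N : ℂ) / 2 - 1) ∨
      (∃ n, N = 2 * n ∧ (∀ i : Fin N, ε i = if (i : ℕ) < n then 1 else -1) ∧
        pr = Fin.rev ∧ κ = (n : ℂ) + 1))
    (u v : ℂ) (h0 : u - v ≠ 0) (h1 : u - v ≠ c) (h2 : u - v ≠ -c)
    (h3 : u - v + c * κ ≠ 0) (h4 : v - u + c * κ ≠ 0)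
    (T S : Matrix (Fin N) (Fin N) A) [Invertible T] [Invertible S]
    (hRTT : RmatA N A ε pr κ c u v * TtensorI T * ItensorS S =
      ItensorS S * TtensorI T * RmatA N A ε pr κ c u v) :
    RmatA N A ε pr κ c u v * TtensorI (twtA ε pr (⅟T)) * ItensorS (twtA ε pr (⅟S)) =
      ItensorS (twtA ε pr (⅟S)) * TtensorI (twtA ε pr (⅟T)) *
        RmatA N A ε pr κ c u v := by
  have hpr : pr = Fin.rev := by
    rcases hdata with ⟨_, hpr, _⟩ | ⟨n, _, _, hpr, _⟩ <;> exact hpr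
  subst hpr
  obtain ⟨θ, hsq, hθ, hκC⟩ : ∃ θ : ℤ, (∀ i, ε i * ε i = 1) ∧
      (∀ i, ε i * ε (Fin.rev i) = θ) ∧ 2 * κ = (N : ℂ) - 2 * ((θ : ℤ) : ℂ) := by
    rcases hdata with ⟨he, -, hκ0⟩ | ⟨n, hn, he, -, hκ0⟩
    · refine ⟨1, fun i => by rw [he i]; ring, fun i => by rw [he i, he i.rev]; ring, ?_⟩
      rw [hκ0]; push_cast; ring
    · refine ⟨-1, ?_, ?_, ?_⟩
      · intro i; rw [he i]; split <;> ring
      · intro i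
        rw [he i, he i.rev]
        have h5 : (i.rev : ℕ) = N - (i + 1) := by
          rw [Fin.val_rev]
        have h6 : (i : ℕ) < N := i.isLt
        rcases Nat.lt_or_ge (i : ℕ) n with h | h
        · rw [if_pos h, if_neg (by omega)]; ring
        · rw [if_neg (by omega), if_pos (by omega)]; ring
      · rw [hκ0, hn]; push_cast; ring
  -- scalars
  set a : ℂ := c / (u - v) with ha
  set b : ℂ := c / (u - v + c * κ) with hb
  set a' : ℂ := c / (v - u) with ha'
  set b' : ℂ := c / (v - u + c * κ) with hb'
  set f : ℂ := 1 + a * a' with hfdef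
  have h0' : v - u ≠ 0 := fun h => h0 (by linear_combination -h)
  have h1' : c - (u - v) ≠ 0 := fun h => h1 (by linear_combination -h)
  have h2' : c + (u - v) ≠ 0 := fun h => h2 (by linear_combination h)
  have hf_ne : f ≠ 0 := by
    have hfe : f = ((c - (u - v)) * (c + (u - v))) / ((u - v) * (v - u)) := by
      rw [hfdef, ha, ha']
      field_simp
      ring
    rw [hfe]
    exact div_ne_zero (mul_ne_zero h1' h2') (mul_ne_zero h0 h0')
  have hP : a + a' = 0 := by rw [ha, ha']; field_simp; ring
  have hQ : -b - b' - ((θ : ℤ) : ℂ) * (a * b') - ((θ : ℤ) : ℂ) * (a' * b)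
      + ((N : ℕ) : ℂ) * (b * b') = 0 := by
    have hb1 : b * (u - v + c * κ) = c := by rw [hb]; field_simp
    have hb2 : b' * (v - u + c * κ) = c := by rw [hb']; field_simp
    have hax : a * (u - v) = c := by rw [ha]; field_simp
    have ha'x : a' * (v - u) = c := by rw [ha']; field_simp
    have hD : (u - v) * ((u - v + c * κ) * (v - u + c * κ)) ≠ 0 :=
      mul_ne_zero h0 (mul_ne_zero h3 h4)
    have hmul : (-b - b' - ((θ : ℤ) : ℂ) * (a * b') - ((θ : ℤ) : ℂ) * (a' * b)
        + ((N : ℕ) : ℂ) * (b * b')) * ((u - v) * ((u - v + c * κ) * (v - u + c * κ))) = 0 := by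
      linear_combination
        (-(u-v)*(v-u+c*κ) + ((θ : ℤ) : ℂ)*c*(v-u+c*κ)
          + ((N : ℕ) : ℂ)*(u-v)*b'*(v-u+c*κ)) * hb1
        + (-(u-v)*(u-v+c*κ) - ((θ : ℤ) : ℂ)*c*(u-v+c*κ) + ((N : ℕ) : ℂ)*c*(u-v)) * hb2
        + (-((θ : ℤ) : ℂ)*b'*(u-v+c*κ)*(v-u+c*κ)) * hax
        + (((θ : ℤ) : ℂ)*b*(u-v+c*κ)*(v-u+c*κ)) * ha'x
        + (-c^2*(u-v)) * hκC
    rcases mul_eq_zero.mp hmul with h | h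
    · exact h
    · exact absurd h hD
  have hQ' : -b' - b - ((θ : ℤ) : ℂ) * (a' * b) - ((θ : ℤ) : ℂ) * (a * b')
      + ((N : ℕ) : ℂ) * (b' * b) = 0 := by linear_combination hQ
  -- the R matrices
  set R : Matrix (Fin N × Fin N) (Fin N × Fin N) A := RmatA N A ε Fin.rev κ c u v with hR
  set R' : Matrix (Fin N × Fin N) (Fin N × Fin N) A := RmatA N A ε Fin.rev κ c v u with hR'
  have hRd : R = 1 + a • PmX N A - b • QmX N A ε := RmatA_eq ε κ c u v
  have hR'd : R' = 1 + a' • PmX N A - b' • QmX N A ε := by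
    rw [hR', RmatA_eq, ha', hb']
  have hRR' : R * R' = f • 1 := by
    rw [hRd, hR'd]
    exact key_mul (PmX N A) (QmX N A ε) ((θ : ℤ) : ℂ) ((N : ℕ) : ℂ)
      PmX_mul_PmX (PmX_mul_QmX ε θ hsq hθ) (QmX_mul_PmX ε θ hsq hθ) (QmX_mul_QmX ε hsq)
      a b a' b' f hfdef.symm hP hQ
  have hR'R : R' * R = f • 1 := by
    rw [hRd, hR'd]
    exact key_mul (PmX N A) (QmX N A ε) ((θ : ℤ) : ℂ) ((N : ℕ) : ℂ)
      PmX_mul_PmX (PmX_mul_QmX ε θ hsq hθ) (QmX_mul_PmX ε θ hsq hθ) (QmX_mul_QmX ε hsq)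
      a' b' a b f (by rw [hfdef]; ring) (by linear_combination hP) hQ'
  -- tensor factors
  set T1 : Matrix (Fin N × Fin N) (Fin N × Fin N) A := TtensorI T with hT1d
  set S2 : Matrix (Fin N × Fin N) (Fin N × Fin N) A := ItensorS S with hS2d
  set T1' : Matrix (Fin N × Fin N) (Fin N × Fin N) A := TtensorI (⅟T) with hT1'd
  set S2' : Matrix (Fin N × Fin N) (Fin N × Fin N) A := ItensorS (⅟S) with hS2'd
  have hT1 : T1 * T1' = 1 := by rw [hT1d, hT1'd, ← TtensorI_mul, mul_invOf_self, TtensorI_one]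
  have hT1' : T1' * T1 = 1 := by rw [hT1d, hT1'd, ← TtensorI_mul, invOf_mul_self, TtensorI_one]
  have hS2 : S2 * S2' = 1 := by rw [hS2d, hS2'd, ← ItensorS_mul, mul_invOf_self, ItensorS_one]
  have hS2' : S2' * S2 = 1 := by rw [hS2d, hS2'd, ← ItensorS_mul, invOf_mul_self, ItensorS_one]
  have cancel : ∀ X Y : Matrix (Fin N × Fin N) (Fin N × Fin N) A,
      f • X = f • Y → X = Y := by
    intro X Y h
    have h7 := congrArg (fun Z => f⁻¹ • Z) h
    simpa [smul_smul, inv_mul_cancel₀ hf_ne] using h7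
  have step1 : T1 * (S2 * R') = R' * (S2 * T1) := by
    have h5 := congrArg (fun X => R' * X * R') hRTT
    simp only [mul_assoc] at h5
    rw [hRR', ← mul_assoc R' R, hR'R] at h5
    refine cancel _ _ ?_
    simpa [smul_mul_assoc, one_mul, mul_smul_comm, mul_one] using h5
  have step2 : S2 * (R' * T1') = T1' * (R' * S2) := by
    have h5 := congrArg (fun X => T1' * X * T1') step1
    simp only [mul_assoc] at h5
    rw [hT1, ← mul_assoc T1' T1, hT1'] at h5
    simpa using h5
  have step3 : R' * (T1' * S2') = S2' * (T1' * R') := by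
    have h5 := congrArg (fun X => S2' * X * S2') step2
    simp only [mul_assoc] at h5
    rw [hS2, ← mul_assoc S2' S2, hS2'] at h5
    simpa using h5
  have step4 : T1' * (S2' * R) = R * (S2' * T1') := by
    have h5 := congrArg (fun X => R * X * R) step3
    simp only [mul_assoc] at h5
    rw [hR'R, ← mul_assoc R R', hRR'] at h5
    refine cancel _ _ ?_
    simpa [smul_mul_assoc, one_mul, mul_smul_comm, mul_one] using h5
  -- conclude
  have hR12 : t12m ε R = R := t12m_RmatA ε hsq κ c u v
  have hcent : ∀ p q (x : A), Commute (R p q) x := fun p q x => RmatA_commute ε Fin.rev κ c u v p q x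
  rw [lemA ε hsq R hR12 hcent (⅟T) (⅟S), lemB ε hsq R hR12 hcent (⅟T) (⅟S)]
  exact congrArg (t12m ε) (by rw [mul_assoc, ← hT1'd, ← hS2'd, step4, ← mul_assoc])
end
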